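/- arXiv:1011.3839 — 2 statements merged into one kernel-verified Lean document; each statement's English description precedes it below -/
import Mathlib

section
/- Let A ⊗_R B be a twisted tensor product of k-algebras, and suppose the underlying vector space of A carries a second associative unital algebra structure A' with the same unit, multiplication written a * a'. Suppose ρ, λ : A → A ⊗ B are linear maps, written ρ(a) = a_(0) ⊗ a_(1) and λ(a) = a_[0] ⊗ a_[1], such that: ρ is an algebra map from A' to A ⊗_R B; λ(1) = 1 ⊗ 1; λ(aa') = a_[0] * (a'_R)_[0] ⊗ (a'_R)_[1] (a_[1])_R for all a, a' ∈ A; a_(0)[0] ⊗ a_(0)[1] a_(1) = a ⊗ 1; and a_[0](0) ⊗ a_[0](1) a_[1] = a ⊗ 1. Then the map R' : B ⊗ A' → A' ⊗ B defined by R'(b ⊗ a) = ((a_(0))_R)_[0] ⊗ ((a_(0))_R)_[1] b_R a_(1) is a twisting map. -/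
open TensorProduct LinearMap

noncomputable section
namespace IUT

variable {k : Type*} [Field k]

section Twisting
variable {A B : Type*} [AddCommGroup A] [Module k A] [AddCommGroup B] [Module k B]

/-- The twisted-tensor-product multiplication map on `A ⊗ B` determined by
multiplications `mA`, `mB` and a linear map `R : B ⊗ A →ₗ A ⊗ B`. -/
def mulOf (mA : A ⊗[k] A →ₗ[k] A) (mB : B ⊗[k] B →ₗ[k] B)
    (R : B ⊗[k] A →ₗ[k] A ⊗[k] B) :
    (A ⊗[k] B) ⊗[k] (A ⊗[k] B) →ₗ[k] A ⊗[k] B :=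
  TensorProduct.map mA mB
    ∘ₗ (TensorProduct.assoc k A A (B ⊗[k] B)).symm.toLinearMap
    ∘ₗ TensorProduct.map LinearMap.id
        ((TensorProduct.assoc k A B B).toLinearMap
          ∘ₗ TensorProduct.map R LinearMap.id
          ∘ₗ (TensorProduct.assoc k B A B).symm.toLinearMap)
    ∘ₗ (TensorProduct.assoc k A B (A ⊗[k] B)).toLinearMap

/-- The axioms of a twisting map, relative to multiplications `mA`, `mB`
with units `uA`, `uB`. -/
def IsTwistingMapMul (mA : A ⊗[k] A →ₗ[k] A) (uA : A)
    (mB : B ⊗[k] B →ₗ[k] B) (uB : B)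
    (R : B ⊗[k] A →ₗ[k] A ⊗[k] B) : Prop :=
  (∀ b : B, R (b ⊗ₜ[k] uA) = uA ⊗ₜ[k] b) ∧
  (∀ a : A, R (uB ⊗ₜ[k] a) = a ⊗ₜ[k] uB) ∧
  (R ∘ₗ TensorProduct.map LinearMap.id mA =
    TensorProduct.map mA LinearMap.id
      ∘ₗ (TensorProduct.assoc k A A B).symm.toLinearMap
      ∘ₗ TensorProduct.map LinearMap.id R
      ∘ₗ (TensorProduct.assoc k A B A).toLinearMap
      ∘ₗ TensorProduct.map R LinearMap.id
      ∘ₗ (TensorProduct.assoc k B A A).symm.toLinearMap) ∧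
  (R ∘ₗ TensorProduct.map mB LinearMap.id =
    TensorProduct.map LinearMap.id mB
      ∘ₗ (TensorProduct.assoc k A B B).toLinearMap
      ∘ₗ TensorProduct.map R LinearMap.id
      ∘ₗ (TensorProduct.assoc k B A B).symm.toLinearMap
      ∘ₗ TensorProduct.map LinearMap.id R
      ∘ₗ (TensorProduct.assoc k B B A).toLinearMap)

/-- The new twisting map `R'` of the invariance-under-twisting theorem:
`R'(b ⊗ a) = ((a₍₀₎)_R)_[0] ⊗ ((a₍₀₎)_R)_[1] · b_R · a₍₁₎`. -/
def twistPrime (mB : B ⊗[k] B →ₗ[k] B) (R : B ⊗[k] A →ₗ[k] A ⊗[k] B)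
    (ρ lam : A →ₗ[k] A ⊗[k] B) : B ⊗[k] A →ₗ[k] A ⊗[k] B :=
  TensorProduct.map LinearMap.id (mB ∘ₗ TensorProduct.map LinearMap.id mB)
    ∘ₗ (TensorProduct.assoc k A B (B ⊗[k] B)).toLinearMap
    ∘ₗ (TensorProduct.assoc k (A ⊗[k] B) B B).toLinearMap
    ∘ₗ TensorProduct.map (TensorProduct.map lam LinearMap.id) LinearMap.id
    ∘ₗ TensorProduct.map R LinearMap.id
    ∘ₗ (TensorProduct.assoc k B A B).symm.toLinearMap
    ∘ₗ TensorProduct.map LinearMap.id ρ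

/-- The right-hand side of condition (4.7):
`a ⊗ a' ↦ a_[0] * (a'_R)_[0] ⊗ (a'_R)_[1] (a_[1])_R`. -/
def lamMulMap (st : A ⊗[k] A →ₗ[k] A) (mB : B ⊗[k] B →ₗ[k] B)
    (R : B ⊗[k] A →ₗ[k] A ⊗[k] B) (lam : A →ₗ[k] A ⊗[k] B) :
    A ⊗[k] A →ₗ[k] A ⊗[k] B :=
  TensorProduct.map st mB
    ∘ₗ (TensorProduct.assoc k A A (B ⊗[k] B)).symm.toLinearMap
    ∘ₗ TensorProduct.map LinearMap.id (TensorProduct.assoc k A B B).toLinearMap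
    ∘ₗ TensorProduct.map LinearMap.id (TensorProduct.map lam LinearMap.id)
    ∘ₗ TensorProduct.map LinearMap.id R
    ∘ₗ (TensorProduct.assoc k A B A).toLinearMap
    ∘ₗ TensorProduct.map lam LinearMap.id

/-- `a ↦ a₍₀₎_[0] ⊗ a₍₀₎_[1] · a₍₁₎` : apply `g` to the first leg of `f` and
multiply the `B`-legs; used in conditions (4.8)/(4.9). -/
def sweedlerContract (mB : B ⊗[k] B →ₗ[k] B) (f g : A →ₗ[k] A ⊗[k] B) :
    A →ₗ[k] A ⊗[k] B :=
  TensorProduct.map LinearMap.id mB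
    ∘ₗ (TensorProduct.assoc k A B B).toLinearMap
    ∘ₗ TensorProduct.map g LinearMap.id
    ∘ₗ f

end Twisting

/-- The twisting-map axioms for two algebras with their ring multiplications. -/
def IsTwistingMap {A B : Type*} [Ring A] [Algebra k A] [Ring B] [Algebra k B]
    (R : B ⊗[k] A →ₗ[k] A ⊗[k] B) : Prop :=
  IsTwistingMapMul (LinearMap.mul' k A) (1 : A) (LinearMap.mul' k B) (1 : B) R


set_option synthInstance.maxHeartbeats 1000000
set_option maxHeartbeats 1000000

section Aux
variable {A B : Type*} [Ring A] [Algebra k A] [Ring B] [Algebra k B]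

/-- Right multiplication by `y` on the second tensor factor. -/
def rmul (y : B) : A ⊗[k] B →ₗ[k] A ⊗[k] B :=
  TensorProduct.map LinearMap.id (mulRight k y)

lemma rmul_tmul (y : B) (x : A) (z : B) :
    rmul (k := k) y (x ⊗ₜ[k] z) = x ⊗ₜ[k] (z * y) := by
  simp [rmul]

lemma rmul_rmul (c d : B) (v : A ⊗[k] B) :
    rmul (k := k) d (rmul (k := k) c v) = rmul (k := k) (c * d) v := by
  induction v using TensorProduct.induction_on with
  | zero => simp
  | tmul x z => simp [rmul_tmul, mul_assoc]
  | add u v hu hv => simp only [map_add, hu, hv]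

lemma rmul_one (v : A ⊗[k] B) : rmul (k := k) (1 : B) v = v := by
  induction v using TensorProduct.induction_on with
  | zero => simp
  | tmul x z => simp [rmul_tmul]
  | add u v hu hv => simp only [map_add, hu, hv]

/-- The contraction `x ⊗ y ↦ f(x)·(1 ⊗ y)`, i.e. apply `f` to the first leg
and multiply its `B`-leg by `y` on the right. -/
def sw (f : A →ₗ[k] A ⊗[k] B) : A ⊗[k] B →ₗ[k] A ⊗[k] B :=
  TensorProduct.map LinearMap.id (mul' k B)
    ∘ₗ (TensorProduct.assoc k A B B).toLinearMap
    ∘ₗ TensorProduct.map f LinearMap.id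

lemma sw_tmul (f : A →ₗ[k] A ⊗[k] B) (x : A) (y : B) :
    sw f (x ⊗ₜ[k] y) = rmul (k := k) y (f x) := by
  have h : ∀ u : A ⊗[k] B,
      TensorProduct.map LinearMap.id (mul' k B)
        ((TensorProduct.assoc k A B B) (u ⊗ₜ[k] y)) = rmul (k := k) y u := by
    intro u
    induction u using TensorProduct.induction_on with
    | zero => simp
    | tmul a b => simp [rmul_tmul, mul'_apply]
    | add u v hu hv => simp only [add_tmul, map_add, LinearEquiv.map_add, hu, hv]
  simp only [sw, coe_comp, Function.comp_apply, LinearEquiv.coe_coe, map_tmul,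
    id_coe, id_eq]
  exact h (f x)

lemma sw_rmul (f : A →ₗ[k] A ⊗[k] B) (c : B) (v : A ⊗[k] B) :
    sw f (rmul (k := k) c v) = rmul (k := k) c (sw f v) := by
  induction v using TensorProduct.induction_on with
  | zero => simp
  | tmul x y => rw [rmul_tmul, sw_tmul, sw_tmul, rmul_rmul]
  | add u v hu hv => simp only [map_add, hu, hv]

lemma sw_sweedler (mB : B ⊗[k] B →ₗ[k] B) (f g : A →ₗ[k] A ⊗[k] B) (x : A) :
    sweedlerContract (mul' k B) f g x = sw g (f x) := by
  simp [sweedlerContract, sw]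

/-- The twisted multiplication of `A ⊗_R B` as a binary operation. -/
def M (R : B ⊗[k] A →ₗ[k] A ⊗[k] B) (x y : A ⊗[k] B) : A ⊗[k] B :=
  mulOf (mul' k A) (mul' k B) R (x ⊗ₜ[k] y)

lemma M_add_left (R : B ⊗[k] A →ₗ[k] A ⊗[k] B) (x x' y : A ⊗[k] B) :
    M R (x + x') y = M R x y + M R x' y := by
  simp [M, add_tmul]

lemma M_add_right (R : B ⊗[k] A →ₗ[k] A ⊗[k] B) (x y y' : A ⊗[k] B) :
    M R x (y + y') = M R x y + M R x y' := by
  simp [M, tmul_add]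

lemma M_zero_left (R : B ⊗[k] A →ₗ[k] A ⊗[k] B) (y : A ⊗[k] B) :
    M R 0 y = 0 := by simp [M]

lemma M_zero_right (R : B ⊗[k] A →ₗ[k] A ⊗[k] B) (x : A ⊗[k] B) :
    M R x 0 = 0 := by simp [M]

lemma mulOf_tmul (μ : A ⊗[k] A →ₗ[k] A) (ν : B ⊗[k] B →ₗ[k] B)
    (R : B ⊗[k] A →ₗ[k] A ⊗[k] B) (a : A) (b : B) (a' : A) (b' : B) :
    mulOf μ ν R ((a ⊗ₜ[k] b) ⊗ₜ[k] (a' ⊗ₜ[k] b')) =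
      TensorProduct.map (μ ∘ₗ (TensorProduct.mk k A A) a)
        (ν ∘ₗ (TensorProduct.mk k B B).flip b') (R (b ⊗ₜ[k] a')) := by
  simp only [mulOf, coe_comp, Function.comp_apply, LinearEquiv.coe_coe,
    TensorProduct.assoc_tmul, map_tmul, id_coe, id_eq, TensorProduct.assoc_symm_tmul]
  generalize R (b ⊗ₜ[k] a') = u
  induction u using TensorProduct.induction_on with
  | zero => simp
  | tmul w z =>
      simp [TensorProduct.mk_apply, flip_apply]
  | add u v hu hv =>
      simp only [add_tmul, LinearEquiv.map_add, tmul_add, map_add, hu, hv]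

lemma M_tmul (R : B ⊗[k] A →ₗ[k] A ⊗[k] B) (a : A) (b : B) (a' : A) (b' : B) :
    M R (a ⊗ₜ[k] b) (a' ⊗ₜ[k] b') =
      TensorProduct.map (mulLeft k a) (mulRight k b') (R (b ⊗ₜ[k] a')) := by
  have h1 : mul' k A ∘ₗ (TensorProduct.mk k A A) a = mulLeft k a := by
    ext x; simp [mul'_apply]
  have h2 : mul' k B ∘ₗ (TensorProduct.mk k B B).flip b' = mulRight k b' := by
    ext x; simp [mul'_apply]
  rw [M, mulOf_tmul, h1, h2]

lemma hex1_pt {R : B ⊗[k] A →ₗ[k] A ⊗[k] B} (hR : IsTwistingMap R)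
    (b : B) (a a' : A) :
    R (b ⊗ₜ[k] (a * a')) =
      TensorProduct.map (mul' k A) LinearMap.id
        ((TensorProduct.assoc k A A B).symm
          (TensorProduct.map LinearMap.id R
            ((TensorProduct.assoc k A B A) (R (b ⊗ₜ[k] a) ⊗ₜ[k] a')))) := by
  have h := DFunLike.congr_fun hR.2.2.1 (b ⊗ₜ[k] (a ⊗ₜ[k] a'))
  simpa only [coe_comp, Function.comp_apply, LinearEquiv.coe_coe, map_tmul,
    id_coe, id_eq, mul'_apply, TensorProduct.assoc_symm_tmul] using h

lemma hex2_pt {R : B ⊗[k] A →ₗ[k] A ⊗[k] B} (hR : IsTwistingMap R)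
    (b b' : B) (a : A) :
    R ((b * b') ⊗ₜ[k] a) =
      TensorProduct.map LinearMap.id (mul' k B)
        ((TensorProduct.assoc k A B B)
          (TensorProduct.map R LinearMap.id
            ((TensorProduct.assoc k B A B).symm (b ⊗ₜ[k] R (b' ⊗ₜ[k] a))))) := by
  have h := DFunLike.congr_fun hR.2.2.2 ((b ⊗ₜ[k] b') ⊗ₜ[k] a)
  simpa only [coe_comp, Function.comp_apply, LinearEquiv.coe_coe, map_tmul,
    id_coe, id_eq, mul'_apply, TensorProduct.assoc_tmul] using h

lemma M_one_right {R : B ⊗[k] A →ₗ[k] A ⊗[k] B} (hR : IsTwistingMap R)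
    (u : A ⊗[k] B) (b : B) :
    M R u ((1 : A) ⊗ₜ[k] b) = rmul (k := k) b u := by
  induction u using TensorProduct.induction_on with
  | zero => simp [M_zero_left]
  | tmul x y => rw [M_tmul, hR.1 y]; simp [rmul_tmul]
  | add u v hu hv => rw [M_add_left, hu, hv, map_add]

lemma M_one_left_gen {R : B ⊗[k] A →ₗ[k] A ⊗[k] B} (b : B) (x : A) (y : B) :
    M R ((1 : A) ⊗ₜ[k] b) (x ⊗ₜ[k] y) = rmul (k := k) y (R (b ⊗ₜ[k] x)) := by
  rw [M_tmul, mulLeft_one]; rfl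

lemma M_unit_left {R : B ⊗[k] A →ₗ[k] A ⊗[k] B} (hR : IsTwistingMap R)
    (u : A ⊗[k] B) : M R ((1 : A) ⊗ₜ[k] (1 : B)) u = u := by
  induction u using TensorProduct.induction_on with
  | zero => simp [M_zero_right]
  | tmul x y => rw [M_one_left_gen, hR.2.1 x, rmul_tmul, one_mul]
  | add u v hu hv => rw [M_add_right, hu, hv]

lemma M_unit_right {R : B ⊗[k] A →ₗ[k] A ⊗[k] B} (hR : IsTwistingMap R)
    (u : A ⊗[k] B) : M R u ((1 : A) ⊗ₜ[k] (1 : B)) = u := by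
  rw [M_one_right hR, rmul_one]

lemma assocL {R : B ⊗[k] A →ₗ[k] A ⊗[k] B} (hR : IsTwistingMap R)
    (a : A) (b' : B) (a'' : A) (b'' : B) (u : A ⊗[k] B) :
    M R (TensorProduct.map (mulLeft k a) (mulRight k b') u) (a'' ⊗ₜ[k] b'') =
      M R (TensorProduct.map (mulLeft k a) LinearMap.id u)
        (rmul (k := k) b'' (R (b' ⊗ₜ[k] a''))) := by
  induction u using TensorProduct.induction_on with
  | zero => simp [M_zero_left]
  | tmul w z =>
      simp only [map_tmul, mulLeft_apply, mulRight_apply, id_coe, id_eq]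
      rw [M_tmul, hex2_pt hR z b' a'']
      generalize R (b' ⊗ₜ[k] a'') = v
      induction v using TensorProduct.induction_on with
      | zero => simp [M_zero_right, rmul]
      | tmul p q =>
          rw [rmul_tmul, M_tmul]
          simp only [TensorProduct.assoc_symm_tmul, map_tmul, id_coe, id_eq]
          generalize R (z ⊗ₜ[k] p) = s
          induction s using TensorProduct.induction_on with
          | zero => simp
          | tmul s1 s2 => simp [mul'_apply, mul_assoc]
          | add s t hs ht =>
              simp only [add_tmul, LinearEquiv.map_add, map_add, hs, ht]
      | add v w hv hw =>
          simp only [tmul_add, map_add, LinearEquiv.map_add, hv, hw,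
            M_add_right]
  | add u v hu hv =>
      simp only [map_add, M_add_left, hu, hv]

lemma assocR {R : B ⊗[k] A →ₗ[k] A ⊗[k] B} (hR : IsTwistingMap R)
    (a : A) (b : B) (a' : A) (b'' : B) (v : A ⊗[k] B) :
    M R (a ⊗ₜ[k] b) (TensorProduct.map (mulLeft k a') (mulRight k b'') v) =
      M R (TensorProduct.map (mulLeft k a) LinearMap.id (R (b ⊗ₜ[k] a')))
        (rmul (k := k) b'' v) := by
  induction v using TensorProduct.induction_on with
  | zero => simp [M_zero_right, rmul]
  | tmul p q =>
      simp only [map_tmul, mulLeft_apply, mulRight_apply, id_coe, id_eq]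
      rw [M_tmul, hex1_pt hR b a' p, rmul_tmul]
      generalize R (b ⊗ₜ[k] a') = u
      induction u using TensorProduct.induction_on with
      | zero => simp [M_zero_left]
      | tmul w z =>
          simp only [TensorProduct.assoc_tmul, map_tmul, id_coe, id_eq]
          rw [M_tmul]
          generalize R (z ⊗ₜ[k] p) = s
          induction s using TensorProduct.induction_on with
          | zero => simp
          | tmul s1 s2 => simp [mul'_apply, mul_assoc]
          | add s t hs ht =>
              simp only [tmul_add, LinearEquiv.map_add, map_add, hs, ht]
      | add u w hu hw =>
          simp only [add_tmul, map_add, LinearEquiv.map_add, hu, hw,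
            M_add_left]
  | add v w hv hw =>
      simp only [map_add, M_add_right, hv, hw, rmul]

lemma M_assoc {R : B ⊗[k] A →ₗ[k] A ⊗[k] B} (hR : IsTwistingMap R)
    (x y z : A ⊗[k] B) : M R (M R x y) z = M R x (M R y z) := by
  induction x using TensorProduct.induction_on with
  | zero => simp [M_zero_left]
  | add x x' hx hx' => simp only [M_add_left, hx, hx']
  | tmul a b =>
    induction y using TensorProduct.induction_on with
    | zero => simp [M_zero_left, M_zero_right]
    | add y y' hy hy' => simp only [M_add_left, M_add_right, hy, hy']
    | tmul a' b' =>
      induction z using TensorProduct.induction_on with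
      | zero => simp [M_zero_right]
      | add z z' hz hz' => simp only [M_add_right, hz, hz']
      | tmul a'' b'' =>
        rw [M_tmul R a b a' b', assocL hR, M_tmul R a' b' a'' b'', assocR hR]

/-- `twistPrime` with the `B`-argument and `ρ` peeled off. -/
def Kfun (R : B ⊗[k] A →ₗ[k] A ⊗[k] B) (lam : A →ₗ[k] A ⊗[k] B) (b : B) :
    A ⊗[k] B →ₗ[k] A ⊗[k] B :=
  TensorProduct.map LinearMap.id
      (mul' k B ∘ₗ TensorProduct.map LinearMap.id (mul' k B))
    ∘ₗ (TensorProduct.assoc k A B (B ⊗[k] B)).toLinearMap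
    ∘ₗ (TensorProduct.assoc k (A ⊗[k] B) B B).toLinearMap
    ∘ₗ TensorProduct.map (TensorProduct.map lam LinearMap.id) LinearMap.id
    ∘ₗ TensorProduct.map R LinearMap.id
    ∘ₗ (TensorProduct.assoc k B A B).symm.toLinearMap
    ∘ₗ TensorProduct.mk k B (A ⊗[k] B) b

lemma twistPrime_apply (R : B ⊗[k] A →ₗ[k] A ⊗[k] B)
    (ρ lam : A →ₗ[k] A ⊗[k] B) (b : B) (a : A) :
    twistPrime (mul' k B) R ρ lam (b ⊗ₜ[k] a) = Kfun R lam b (ρ a) := by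
  simp [twistPrime, Kfun, TensorProduct.mk_apply]

lemma Kfun_tmul (R : B ⊗[k] A →ₗ[k] A ⊗[k] B) (lam : A →ₗ[k] A ⊗[k] B)
    (b : B) (x : A) (y : B) :
    Kfun R lam b (x ⊗ₜ[k] y) = rmul (k := k) y (sw lam (R (b ⊗ₜ[k] x))) := by
  simp only [Kfun, coe_comp, Function.comp_apply, LinearEquiv.coe_coe,
    TensorProduct.mk_apply, TensorProduct.assoc_symm_tmul, map_tmul, id_coe, id_eq]
  generalize R (b ⊗ₜ[k] x) = s
  induction s using TensorProduct.induction_on with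
  | zero => simp
  | tmul w z =>
      rw [sw_tmul]
      simp only [map_tmul, id_coe, id_eq, TensorProduct.assoc_tmul]
      generalize lam w = t
      induction t using TensorProduct.induction_on with
      | zero => simp
      | tmul w0 w1 => simp [rmul_tmul, mul'_apply, mul_assoc]
      | add t t' ht ht' =>
          simp only [add_tmul, LinearEquiv.map_add, map_add, ht, ht']
  | add s s' hs hs' =>
      simp only [add_tmul, LinearEquiv.map_add, map_add, hs, hs']

section Hyps
variable {R : B ⊗[k] A →ₗ[k] A ⊗[k] B} {st : A →ₗ[k] A →ₗ[k] A}
  {ρ lam : A →ₗ[k] A ⊗[k] B}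

lemma inv1 (h48 : ∀ a : A, sweedlerContract (mul' k B) ρ lam a = a ⊗ₜ[k] (1 : B))
    (u : A ⊗[k] B) : sw lam (sw ρ u) = u := by
  induction u using TensorProduct.induction_on with
  | zero => simp
  | tmul x y =>
      rw [sw_tmul, sw_rmul, ← sw_sweedler (mul' k B), h48 x, rmul_tmul, one_mul]
  | add u v hu hv => simp only [map_add, hu, hv]

lemma inv2 (h49 : ∀ a : A, sweedlerContract (mul' k B) lam ρ a = a ⊗ₜ[k] (1 : B))
    (u : A ⊗[k] B) : sw ρ (sw lam u) = u := by
  induction u using TensorProduct.induction_on with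
  | zero => simp
  | tmul x y =>
      rw [sw_tmul, sw_rmul, ← sw_sweedler (mul' k B), h49 x, rmul_tmul, one_mul]
  | add u v hu hv => simp only [map_add, hu, hv]

lemma tp_unit_r (hR : IsTwistingMap R)
    (hρ_one : ρ 1 = (1 : A) ⊗ₜ[k] (1 : B))
    (hlam_one : lam 1 = (1 : A) ⊗ₜ[k] (1 : B)) (b : B) :
    twistPrime (mul' k B) R ρ lam (b ⊗ₜ[k] (1 : A)) = (1 : A) ⊗ₜ[k] b := by
  rw [twistPrime_apply, hρ_one, Kfun_tmul, hR.1 b, sw_tmul, hlam_one,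
    rmul_tmul, rmul_tmul, one_mul, mul_one]

lemma Kfun_one (hR : IsTwistingMap R) (v : A ⊗[k] B) :
    Kfun R lam (1 : B) v = sw lam v := by
  induction v using TensorProduct.induction_on with
  | zero => simp
  | tmul x y => rw [Kfun_tmul, hR.2.1 x, sw_tmul, sw_tmul, rmul_rmul, one_mul]
  | add u v hu hv => simp only [map_add, hu, hv]

lemma tp_unit_l (hR : IsTwistingMap R)
    (h48 : ∀ a : A, sweedlerContract (mul' k B) ρ lam a = a ⊗ₜ[k] (1 : B))
    (a : A) :
    twistPrime (mul' k B) R ρ lam ((1 : B) ⊗ₜ[k] a) = a ⊗ₜ[k] (1 : B) := by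
  rw [twistPrime_apply, Kfun_one hR, ← sw_sweedler (mul' k B), h48 a]

lemma Kphi (hR : IsTwistingMap R)
    (h49 : ∀ a : A, sweedlerContract (mul' k B) lam ρ a = a ⊗ₜ[k] (1 : B))
    (b : B) (v : A ⊗[k] B) :
    sw ρ (Kfun R lam b v) = M R ((1 : A) ⊗ₜ[k] b) v := by
  induction v using TensorProduct.induction_on with
  | zero => simp [M_zero_right]
  | tmul x y =>
      rw [Kfun_tmul, sw_rmul, inv2 h49, M_one_left_gen]
  | add u v hu hv => simp only [map_add, M_add_right, hu, hv]

/-- The candidate new multiplication, as a binary operation. -/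
def Mst (st : A →ₗ[k] A →ₗ[k] A) (Rp : B ⊗[k] A →ₗ[k] A ⊗[k] B)
    (x y : A ⊗[k] B) : A ⊗[k] B :=
  mulOf (TensorProduct.lift st) (mul' k B) Rp (x ⊗ₜ[k] y)

lemma Mst_add_left (Rp : B ⊗[k] A →ₗ[k] A ⊗[k] B) (x x' y : A ⊗[k] B) :
    Mst st Rp (x + x') y = Mst st Rp x y + Mst st Rp x' y := by
  simp [Mst, add_tmul]

lemma Mst_add_right (Rp : B ⊗[k] A →ₗ[k] A ⊗[k] B) (x y y' : A ⊗[k] B) :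
    Mst st Rp x (y + y') = Mst st Rp x y + Mst st Rp x y' := by
  simp [Mst, tmul_add]

lemma Mst_zero_left (Rp : B ⊗[k] A →ₗ[k] A ⊗[k] B) (y : A ⊗[k] B) :
    Mst st Rp 0 y = 0 := by simp [Mst]

lemma Mst_zero_right (Rp : B ⊗[k] A →ₗ[k] A ⊗[k] B) (x : A ⊗[k] B) :
    Mst st Rp x 0 = 0 := by simp [Mst]

lemma Mst_tmul (Rp : B ⊗[k] A →ₗ[k] A ⊗[k] B) (a : A) (b : B) (a' : A) (b' : B) :
    Mst st Rp (a ⊗ₜ[k] b) (a' ⊗ₜ[k] b') =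
      TensorProduct.map (st a) (mulRight k b') (Rp (b ⊗ₜ[k] a')) := by
  have h1 : TensorProduct.lift st ∘ₗ (TensorProduct.mk k A A) a = st a := by
    ext x; simp
  have h2 : mul' k B ∘ₗ (TensorProduct.mk k B B).flip b' = mulRight k b' := by
    ext x; simp [mul'_apply]
  rw [Mst, mulOf_tmul, h1, h2]

lemma PL1 (hR : IsTwistingMap R)
    (hρ_mul : ∀ a a' : A, ρ (st a a') =
      mulOf (mul' k A) (mul' k B) R (ρ a ⊗ₜ[k] ρ a'))
    (a : A) (b' : B) (u : A ⊗[k] B) :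
    sw ρ (TensorProduct.map (st a) (mulRight k b') u) =
      M R (ρ a) (rmul (k := k) b' (sw ρ u)) := by
  induction u using TensorProduct.induction_on with
  | zero => simp [M_zero_right, rmul]
  | tmul x y =>
      simp only [map_tmul, mulRight_apply]
      rw [sw_tmul, sw_tmul, rmul_rmul]
      have : ρ (st a x) = M R (ρ a) (ρ x) := hρ_mul a x
      rw [this, ← M_one_right hR (M R (ρ a) (ρ x)) (y * b'), M_assoc hR,
        M_one_right hR]
  | add u v hu hv => simp only [map_add, hu, hv, M_add_right, rmul]

lemma phi_mul (hR : IsTwistingMap R)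
    (hρ_mul : ∀ a a' : A, ρ (st a a') =
      mulOf (mul' k A) (mul' k B) R (ρ a ⊗ₜ[k] ρ a'))
    (h49 : ∀ a : A, sweedlerContract (mul' k B) lam ρ a = a ⊗ₜ[k] (1 : B))
    (x y : A ⊗[k] B) :
    sw ρ (Mst st (twistPrime (mul' k B) R ρ lam) x y) =
      M R (sw ρ x) (sw ρ y) := by
  induction x using TensorProduct.induction_on with
  | zero => simp [Mst_zero_left, M_zero_left]
  | add x x' hx hx' => simp only [Mst_add_left, map_add, M_add_left, hx, hx']
  | tmul a b =>
    induction y using TensorProduct.induction_on with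
    | zero => simp [Mst_zero_right, M_zero_right]
    | add y y' hy hy' =>
        simp only [Mst_add_right, map_add, M_add_right, hy, hy']
    | tmul a' b' =>
      rw [Mst_tmul, PL1 hR hρ_mul, twistPrime_apply, Kphi hR h49,
        sw_tmul, sw_tmul]
      rw [← M_one_right hR (M R ((1:A) ⊗ₜ[k] b) (ρ a')) b',
        ← M_one_right hR (ρ a') b', ← M_one_right hR (ρ a) b,
        M_assoc hR ((1:A) ⊗ₜ[k] b) (ρ a') ((1:A) ⊗ₜ[k] b'),
        M_assoc hR (ρ a) ((1:A) ⊗ₜ[k] b)]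

lemma Mst_eq (hR : IsTwistingMap R)
    (hρ_mul : ∀ a a' : A, ρ (st a a') =
      mulOf (mul' k A) (mul' k B) R (ρ a ⊗ₜ[k] ρ a'))
    (h48 : ∀ a : A, sweedlerContract (mul' k B) ρ lam a = a ⊗ₜ[k] (1 : B))
    (h49 : ∀ a : A, sweedlerContract (mul' k B) lam ρ a = a ⊗ₜ[k] (1 : B))
    (x y : A ⊗[k] B) :
    Mst st (twistPrime (mul' k B) R ρ lam) x y =
      sw lam (M R (sw ρ x) (sw ρ y)) := by
  rw [← phi_mul hR hρ_mul h49 x y, inv1 h48]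

lemma Mst_assoc (hR : IsTwistingMap R)
    (hρ_mul : ∀ a a' : A, ρ (st a a') =
      mulOf (mul' k A) (mul' k B) R (ρ a ⊗ₜ[k] ρ a'))
    (h48 : ∀ a : A, sweedlerContract (mul' k B) ρ lam a = a ⊗ₜ[k] (1 : B))
    (h49 : ∀ a : A, sweedlerContract (mul' k B) lam ρ a = a ⊗ₜ[k] (1 : B))
    (x y z : A ⊗[k] B) :
    Mst st (twistPrime (mul' k B) R ρ lam)
        (Mst st (twistPrime (mul' k B) R ρ lam) x y) z =
      Mst st (twistPrime (mul' k B) R ρ lam) x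
        (Mst st (twistPrime (mul' k B) R ρ lam) y z) := by
  simp only [Mst_eq hR hρ_mul h48 h49, inv2 h49, M_assoc hR]

lemma m_repr (hst_one : ∀ a : A, st 1 a = a)
    (b : B) (c : A) :
    Mst st (twistPrime (mul' k B) R ρ lam) ((1 : A) ⊗ₜ[k] b) (c ⊗ₜ[k] (1 : B)) =
      twistPrime (mul' k B) R ρ lam (b ⊗ₜ[k] c) := by
  rw [Mst_tmul]
  generalize twistPrime (mul' k B) R ρ lam (b ⊗ₜ[k] c) = s
  induction s using TensorProduct.induction_on with
  | zero => simp
  | tmul x y => simp [hst_one]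
  | add u v hu hv => simp only [map_add, hu, hv]

lemma m_aa (hR : IsTwistingMap R)
    (h48 : ∀ a : A, sweedlerContract (mul' k B) ρ lam a = a ⊗ₜ[k] (1 : B))
    (a a' : A) :
    Mst st (twistPrime (mul' k B) R ρ lam) (a ⊗ₜ[k] (1 : B)) (a' ⊗ₜ[k] (1 : B)) =
      st a a' ⊗ₜ[k] (1 : B) := by
  rw [Mst_tmul, tp_unit_l hR h48]
  simp

lemma m_bb (hR : IsTwistingMap R) (hst_one : ∀ a : A, st 1 a = a)
    (hρ_one : ρ 1 = (1 : A) ⊗ₜ[k] (1 : B))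
    (hlam_one : lam 1 = (1 : A) ⊗ₜ[k] (1 : B)) (b b' : B) :
    Mst st (twistPrime (mul' k B) R ρ lam) ((1 : A) ⊗ₜ[k] b) ((1 : A) ⊗ₜ[k] b') =
      (1 : A) ⊗ₜ[k] (b * b') := by
  rw [Mst_tmul, tp_unit_r hR hρ_one hlam_one]
  simp [hst_one]

lemma HR1 (Rp : B ⊗[k] A →ₗ[k] A ⊗[k] B) (a' : A) (u : A ⊗[k] B) :
    TensorProduct.map (TensorProduct.lift st) LinearMap.id
        ((TensorProduct.assoc k A A B).symm
          (TensorProduct.map LinearMap.id Rp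
            ((TensorProduct.assoc k A B A) (u ⊗ₜ[k] a')))) =
      Mst st Rp u (a' ⊗ₜ[k] (1 : B)) := by
  induction u using TensorProduct.induction_on with
  | zero => simp [Mst_zero_left]
  | tmul x y =>
      simp only [TensorProduct.assoc_tmul, map_tmul, id_coe, id_eq]
      rw [Mst_tmul]
      generalize Rp (y ⊗ₜ[k] a') = s
      induction s using TensorProduct.induction_on with
      | zero => simp
      | tmul p q => simp
      | add u v hu hv =>
          simp only [tmul_add, LinearEquiv.map_add, map_add, hu, hv]
  | add u v hu hv =>
      simp only [add_tmul, LinearEquiv.map_add, map_add, hu, hv, Mst_add_left]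

lemma HR2 (hst_one : ∀ a : A, st 1 a = a)
    (Rp : B ⊗[k] A →ₗ[k] A ⊗[k] B) (b : B) (v : A ⊗[k] B) :
    TensorProduct.map LinearMap.id (mul' k B)
        ((TensorProduct.assoc k A B B)
          (TensorProduct.map Rp LinearMap.id
            ((TensorProduct.assoc k B A B).symm (b ⊗ₜ[k] v)))) =
      Mst st Rp ((1 : A) ⊗ₜ[k] b) v := by
  induction v using TensorProduct.induction_on with
  | zero => simp [Mst_zero_right]
  | tmul p q =>
      simp only [TensorProduct.assoc_symm_tmul, map_tmul, id_coe, id_eq]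
      rw [Mst_tmul]
      generalize Rp (b ⊗ₜ[k] p) = s
      induction s using TensorProduct.induction_on with
      | zero => simp
      | tmul x y => simp [mul'_apply, hst_one]
      | add u v hu hv =>
          simp only [add_tmul, LinearEquiv.map_add, map_add, hu, hv]
  | add u v hu hv =>
      simp only [tmul_add, LinearEquiv.map_add, map_add, hu, hv, Mst_add_right]

end Hyps

end Aux


/-- invariance under twisting, first part. Given a twisted
tensor product `A ⊗_R B`, a second algebra structure `*` (given by `st`) on `A`
with the same unit, and maps `ρ, λ` satisfying the stated conditions, the map
`R'(b ⊗ a) = ((a₍₀₎)_R)_[0] ⊗ ((a₍₀₎)_R)_[1] b_R a₍₁₎` is a twisting map. -/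
theorem twistPrime_isTwistingMap
    {A B : Type*} [Ring A] [Algebra k A] [Ring B] [Algebra k B]
    (R : B ⊗[k] A →ₗ[k] A ⊗[k] B) (hR : IsTwistingMap R)
    -- the second algebra structure `A'` on the vector space `A`, same unit `1`
    (st : A →ₗ[k] A →ₗ[k] A)
    (hst_one : ∀ a : A, st 1 a = a) (hst_one' : ∀ a : A, st a 1 = a)
    (hst_assoc : ∀ a b c : A, st (st a b) c = st a (st b c))
    (ρ lam : A →ₗ[k] A ⊗[k] B)
    -- `ρ` is an algebra map from `A'` to `A ⊗_R B`
    (hρ_one : ρ 1 = (1 : A) ⊗ₜ[k] (1 : B))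
    (hρ_mul : ∀ a a' : A, ρ (st a a') =
      mulOf (LinearMap.mul' k A) (LinearMap.mul' k B) R (ρ a ⊗ₜ[k] ρ a'))
    (hlam_one : lam 1 = (1 : A) ⊗ₜ[k] (1 : B))
    -- condition (4.7): `λ(aa') = a_[0] * (a'_R)_[0] ⊗ (a'_R)_[1] (a_[1])_R`
    (h47 : ∀ a a' : A, lam (a * a') =
      lamMulMap (TensorProduct.lift st) (LinearMap.mul' k B) R lam (a ⊗ₜ[k] a'))
    -- condition (4.8): `a₍₀₎_[0] ⊗ a₍₀₎_[1] a₍₁₎ = a ⊗ 1`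
    (h48 : ∀ a : A, sweedlerContract (LinearMap.mul' k B) ρ lam a = a ⊗ₜ[k] (1 : B))
    -- condition (4.9): `a_[0]₍₀₎ ⊗ a_[0]₍₁₎ a_[1] = a ⊗ 1`
    (h49 : ∀ a : A, sweedlerContract (LinearMap.mul' k B) lam ρ a = a ⊗ₜ[k] (1 : B)) :
    IsTwistingMapMul (TensorProduct.lift st) (1 : A) (LinearMap.mul' k B) (1 : B)
      (twistPrime (LinearMap.mul' k B) R ρ lam) := by
  refine ⟨fun b => tp_unit_r hR hρ_one hlam_one b,
          fun a => tp_unit_l hR h48 a, ?_, ?_⟩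
  · apply TensorProduct.ext'
    intro b v
    induction v using TensorProduct.induction_on with
    | zero => simp
    | add u v hu hv => simp only [tmul_add, map_add, hu, hv]
    | tmul a a' =>
        simp only [coe_comp, Function.comp_apply, LinearEquiv.coe_coe, map_tmul,
          id_coe, id_eq, lift.tmul, TensorProduct.assoc_symm_tmul]
        rw [HR1]
        calc twistPrime (mul' k B) R ρ lam (b ⊗ₜ[k] st a a')
            = Mst st (twistPrime (mul' k B) R ρ lam)
                ((1:A) ⊗ₜ[k] b) (st a a' ⊗ₜ[k] (1:B)) :=
              (m_repr hst_one _ _).symm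
          _ = Mst st (twistPrime (mul' k B) R ρ lam) ((1:A) ⊗ₜ[k] b)
                (Mst st (twistPrime (mul' k B) R ρ lam)
                  (a ⊗ₜ[k] (1:B)) (a' ⊗ₜ[k] (1:B))) := by
              rw [m_aa hR h48]
          _ = Mst st (twistPrime (mul' k B) R ρ lam)
                (Mst st (twistPrime (mul' k B) R ρ lam)
                  ((1:A) ⊗ₜ[k] b) (a ⊗ₜ[k] (1:B))) (a' ⊗ₜ[k] (1:B)) :=
              (Mst_assoc hR hρ_mul h48 h49 _ _ _).symm
          _ = Mst st (twistPrime (mul' k B) R ρ lam)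
                (twistPrime (mul' k B) R ρ lam (b ⊗ₜ[k] a)) (a' ⊗ₜ[k] (1:B)) := by
              rw [m_repr hst_one]
  · apply TensorProduct.ext'
    intro u a
    induction u using TensorProduct.induction_on with
    | zero => simp
    | add u v hu hv => simp only [add_tmul, map_add, hu, hv]
    | tmul b b' =>
        simp only [coe_comp, Function.comp_apply, LinearEquiv.coe_coe, map_tmul,
          id_coe, id_eq, mul'_apply, TensorProduct.assoc_tmul]
        rw [HR2 hst_one]
        calc twistPrime (mul' k B) R ρ lam ((b * b') ⊗ₜ[k] a)
            = Mst st (twistPrime (mul' k B) R ρ lam)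
                ((1:A) ⊗ₜ[k] (b * b')) (a ⊗ₜ[k] (1:B)) :=
              (m_repr hst_one _ _).symm
          _ = Mst st (twistPrime (mul' k B) R ρ lam)
                (Mst st (twistPrime (mul' k B) R ρ lam)
                  ((1:A) ⊗ₜ[k] b) ((1:A) ⊗ₜ[k] b')) (a ⊗ₜ[k] (1:B)) := by
              rw [m_bb hR hst_one hρ_one hlam_one]
          _ = Mst st (twistPrime (mul' k B) R ρ lam) ((1:A) ⊗ₜ[k] b)
                (Mst st (twistPrime (mul' k B) R ρ lam)
                  ((1:A) ⊗ₜ[k] b') (a ⊗ₜ[k] (1:B))) :=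
              Mst_assoc hR hρ_mul h48 h49 _ _ _
          _ = Mst st (twistPrime (mul' k B) R ρ lam) ((1:A) ⊗ₜ[k] b)
                (twistPrime (mul' k B) R ρ lam (b' ⊗ₜ[k] a)) := by
              rw [m_repr hst_one]


end IUT
end
end

section
/- Let A, B be k-algebras and R : B ⊗ A → A ⊗ B a linear map (notation R(b ⊗ a) = a_R ⊗ b_R). Suppose μ : B ⊗ A → A, μ(b ⊗ a) = b·a, and ρ : A → A ⊗ B, ρ(a) = a_(0) ⊗ a_(1), are linear maps, and define a * a' := a_(0)(a_(1)·a'). Assume: ρ(1) = 1 ⊗ 1; 1·a = a; a_(0)(a_(1)·1) = a; b·(a*a') = (a_(0))_R (b_R a_(1) · a'); and ρ(a*a') = a_(0) (a'_(0))_R ⊗ (a_(1))_R a'_(1) for all a, a' ∈ A, b ∈ B. Then (A, *, 1) is an associative unital algebra. -/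
open TensorProduct LinearMap

noncomputable section
namespace IUT

variable {k : Type*} [Field k]

section Stmt3
variable {A B : Type*} [Ring A] [Algebra k A] [Ring B] [Algebra k B]

/-- `a * a' := a₍₀₎ (a₍₁₎ · a')`. -/
def starOf (ρ : A →ₗ[k] A ⊗[k] B) (μ : B ⊗[k] A →ₗ[k] A) :
    A ⊗[k] A →ₗ[k] A :=
  LinearMap.mul' k A
    ∘ₗ TensorProduct.map LinearMap.id μ
    ∘ₗ (TensorProduct.assoc k A B A).toLinearMap
    ∘ₗ TensorProduct.map ρ LinearMap.id

/-- `b ⊗ (a ⊗ a') ↦ (a₍₀₎)_R (b_R a₍₁₎ · a')`, the right-hand side of (4.2). -/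
def rhs42 (ρ : A →ₗ[k] A ⊗[k] B) (μ : B ⊗[k] A →ₗ[k] A)
    (R : B ⊗[k] A →ₗ[k] A ⊗[k] B) : B ⊗[k] (A ⊗[k] A) →ₗ[k] A :=
  LinearMap.mul' k A
    ∘ₗ TensorProduct.map LinearMap.id μ
    ∘ₗ (TensorProduct.assoc k A B A).toLinearMap
    ∘ₗ TensorProduct.map
        (TensorProduct.map LinearMap.id (LinearMap.mul' k B)
          ∘ₗ (TensorProduct.assoc k A B B).toLinearMap) LinearMap.id
    ∘ₗ TensorProduct.map (TensorProduct.map R LinearMap.id) LinearMap.id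
    ∘ₗ TensorProduct.map (TensorProduct.assoc k B A B).symm.toLinearMap LinearMap.id
    ∘ₗ TensorProduct.map (TensorProduct.map LinearMap.id ρ) LinearMap.id
    ∘ₗ (TensorProduct.assoc k B A A).symm.toLinearMap

set_option synthInstance.maxHeartbeats 1000000
set_option maxHeartbeats 1000000

/-- Auxiliary map: `(x ⊗ y) ⊗ a ↦ x * μ(y ⊗ a)`. -/
def Sm (μ : B ⊗[k] A →ₗ[k] A) : (A ⊗[k] B) ⊗[k] A →ₗ[k] A :=
  LinearMap.mul' k A
    ∘ₗ TensorProduct.map LinearMap.id μ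
    ∘ₗ (TensorProduct.assoc k A B A).toLinearMap

lemma Sm_tmul (μ : B ⊗[k] A →ₗ[k] A) (x : A) (y : B) (a : A) :
    Sm μ ((x ⊗ₜ[k] y) ⊗ₜ[k] a) = x * μ (y ⊗ₜ[k] a) := by
  simp [Sm]

lemma starOf_apply (ρ : A →ₗ[k] A ⊗[k] B) (μ : B ⊗[k] A →ₗ[k] A) (a a' : A) :
    starOf ρ μ (a ⊗ₜ[k] a') = Sm μ (ρ a ⊗ₜ[k] a') := rfl

/-- The part of `rhs42` not involving `ρ`. -/
def Hm (μ : B ⊗[k] A →ₗ[k] A) (R : B ⊗[k] A →ₗ[k] A ⊗[k] B) :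
    (B ⊗[k] (A ⊗[k] B)) ⊗[k] A →ₗ[k] A :=
  Sm μ
    ∘ₗ TensorProduct.map
        (TensorProduct.map LinearMap.id (LinearMap.mul' k B)
          ∘ₗ (TensorProduct.assoc k A B B).toLinearMap) LinearMap.id
    ∘ₗ TensorProduct.map (TensorProduct.map R LinearMap.id) LinearMap.id
    ∘ₗ TensorProduct.map (TensorProduct.assoc k B A B).symm.toLinearMap LinearMap.id

lemma rhs42_apply (ρ : A →ₗ[k] A ⊗[k] B) (μ : B ⊗[k] A →ₗ[k] A)
    (R : B ⊗[k] A →ₗ[k] A ⊗[k] B) (b : B) (a a' : A) :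
    rhs42 ρ μ R (b ⊗ₜ[k] (a ⊗ₜ[k] a')) = Hm μ R ((b ⊗ₜ[k] ρ a) ⊗ₜ[k] a') := rfl

lemma Hm_tmul (μ : B ⊗[k] A →ₗ[k] A) (R : B ⊗[k] A →ₗ[k] A ⊗[k] B)
    (y : B) (u : A) (v : B) (c : A) :
    Hm μ R ((y ⊗ₜ[k] (u ⊗ₜ[k] v)) ⊗ₜ[k] c) =
      Sm μ (TensorProduct.map LinearMap.id (LinearMap.mulRight k v) (R (y ⊗ₜ[k] u))
        ⊗ₜ[k] c) := by
  simp only [Hm, LinearMap.comp_apply, TensorProduct.map_tmul, LinearMap.id_coe, id_eq,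
    LinearEquiv.coe_coe, TensorProduct.assoc_symm_tmul]
  generalize R (y ⊗ₜ[k] u) = r
  induction r using TensorProduct.induction_on with
  | zero => simp
  | tmul p q => simp [mul'_apply]
  | add r₁ r₂ h1 h2 => simp_all [add_tmul]

lemma mulOf_tmul_s3 (R : B ⊗[k] A →ₗ[k] A ⊗[k] B) (x : A) (y : B) (u : A) (v : B) :
    mulOf (LinearMap.mul' k A) (LinearMap.mul' k B) R ((x ⊗ₜ[k] y) ⊗ₜ[k] (u ⊗ₜ[k] v)) =
      TensorProduct.map (LinearMap.mulLeft k x) (LinearMap.mulRight k v)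
        (R (y ⊗ₜ[k] u)) := by
  simp only [mulOf, LinearMap.comp_apply, TensorProduct.map_tmul, LinearMap.id_coe, id_eq,
    LinearEquiv.coe_coe, TensorProduct.assoc_tmul, TensorProduct.assoc_symm_tmul]
  generalize R (y ⊗ₜ[k] u) = r
  induction r using TensorProduct.induction_on with
  | zero => simp
  | tmul p q => simp [mul'_apply]
  | add r₁ r₂ h1 h2 => simp_all [tmul_add, add_tmul]

lemma key1 (μ : B ⊗[k] A →ₗ[k] A) (x : A) (v : B) (c : A) (r : A ⊗[k] B) :
    Sm μ (TensorProduct.map (LinearMap.mulLeft k x) (LinearMap.mulRight k v) r ⊗ₜ[k] c) =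
      x * Sm μ (TensorProduct.map LinearMap.id (LinearMap.mulRight k v) r ⊗ₜ[k] c) := by
  induction r using TensorProduct.induction_on with
  | zero => simp
  | tmul p q => simp [Sm_tmul, mul_assoc]
  | add r₁ r₂ h1 h2 => simp_all [add_tmul, mul_add]

lemma key2 (μ : B ⊗[k] A →ₗ[k] A) (R : B ⊗[k] A →ₗ[k] A ⊗[k] B)
    (x : A) (y : B) (c : A) (s : A ⊗[k] B) :
    Sm μ (mulOf (LinearMap.mul' k A) (LinearMap.mul' k B) R ((x ⊗ₜ[k] y) ⊗ₜ[k] s) ⊗ₜ[k] c)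
      = x * Hm μ R ((y ⊗ₜ[k] s) ⊗ₜ[k] c) := by
  induction s using TensorProduct.induction_on with
  | zero => simp [tmul_zero]
  | tmul u v => rw [mulOf_tmul_s3, Hm_tmul, key1]
  | add s₁ s₂ h1 h2 => simp_all [tmul_add, add_tmul, mul_add]

/-- Under conditions (4.1)–(4.3), the product
`a * a' = a₍₀₎ (a₍₁₎ · a')` makes `(A, *, 1)` an associative unital algebra. -/
theorem starOf_associative_unital
    (R : B ⊗[k] A →ₗ[k] A ⊗[k] B)
    (μ : B ⊗[k] A →ₗ[k] A) (ρ : A →ₗ[k] A ⊗[k] B)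
    -- (4.1)
    (hρ_one : ρ 1 = (1 : A) ⊗ₜ[k] (1 : B))
    (hμ_one : ∀ a : A, μ ((1 : B) ⊗ₜ[k] a) = a)
    (hstar_one : ∀ a : A, starOf ρ μ (a ⊗ₜ[k] (1 : A)) = a)
    -- (4.2): `b · (a * a') = a₍₀₎_R (b_R a₍₁₎ · a')`
    (h42 : ∀ (b : B) (a a' : A),
      μ (b ⊗ₜ[k] starOf ρ μ (a ⊗ₜ[k] a')) = rhs42 ρ μ R (b ⊗ₜ[k] (a ⊗ₜ[k] a')))
    -- (4.3): `ρ(a * a') = a₍₀₎ a'₍₀₎_R ⊗ a₍₁₎_R a'₍₁₎`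
    (h43 : ∀ a a' : A, ρ (starOf ρ μ (a ⊗ₜ[k] a')) =
      mulOf (LinearMap.mul' k A) (LinearMap.mul' k B) R (ρ a ⊗ₜ[k] ρ a')) :
    (∀ a : A, starOf ρ μ ((1 : A) ⊗ₜ[k] a) = a) ∧
    (∀ a : A, starOf ρ μ (a ⊗ₜ[k] (1 : A)) = a) ∧
    (∀ a b c : A,
      starOf ρ μ (starOf ρ μ (a ⊗ₜ[k] b) ⊗ₜ[k] c) =
      starOf ρ μ (a ⊗ₜ[k] starOf ρ μ (b ⊗ₜ[k] c))) := by
  refine ⟨fun a => ?_, hstar_one, fun a b c => ?_⟩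
  · rw [starOf_apply, hρ_one, Sm_tmul, hμ_one, one_mul]
  · have h : ∀ y : B, μ (y ⊗ₜ[k] starOf ρ μ (b ⊗ₜ[k] c)) = Hm μ R ((y ⊗ₜ[k] ρ b) ⊗ₜ[k] c) :=
      fun y => (h42 y b c).trans (rhs42_apply ρ μ R y b c)
    rw [starOf_apply, h43, starOf_apply]
    induction ρ a using TensorProduct.induction_on with
    | zero => simp [zero_tmul]
    | tmul x y => rw [key2, Sm_tmul, h y]
    | add t₁ t₂ h1 h2 => simp_all [add_tmul]

end Stmt3
end IUT
end
end
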